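/- (Discrete form of the Steady-State Field at Points y_k Lemma.) Let ℓ ≥ 1 and let a : ℤ/ℓℤ → ℝ. Suppose z : ℤ/ℓℤ → ℝ satisfies the cyclic recursion z_k = max(z_{k−1} + a_k, 0) for every k, and z_j = 0 for some index j. Then for every k, z_k = max_{b ∈ {0,…,ℓ−1}} N_{k−b,k}, where N_{k,k} := 0 and, for b ≥ 1, N_{k−b,k} := Σ_{w=0}^{b−1} a_{k−w} (indices taken modulo ℓ). -/

import Mathlib

/-- Discrete form of the steady-state field lemma at the exit points `y_k`:
if `z` is an `ℓ`-periodic (cyclic) sequence satisfying `z_k = max (z_{k−1} + a_k) 0`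
with `a` also `ℓ`-periodic, and `z` vanishes at some index, then
`z_k = max_{b ∈ {0,…,ℓ−1}} N_{k−b,k}` where `N_{k−b,k} = Σ_{w=0}^{b−1} a_{k−w}`. -/
theorem steady_state_at_exit_points (ℓ : ℕ) (hℓ : 1 ≤ ℓ) (a z : ℤ → ℝ)
    (ha : ∀ k : ℤ, a (k + (ℓ : ℤ)) = a k) (hz : ∀ k : ℤ, z (k + (ℓ : ℤ)) = z k)
    (hrec : ∀ k : ℤ, z k = max (z (k - 1) + a k) 0)
    (hzero : ∃ j : ℤ, z j = 0) :
    ∀ k : ℤ, z k = (Finset.range ℓ).sup'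
      (Finset.nonempty_range_iff.mpr (by omega))
      (fun b => ∑ w ∈ Finset.range b, a (k - (w : ℤ))) := by
  intro k
  set S : ℕ → ℝ := fun b => ∑ w ∈ Finset.range b, a (k - (w : ℤ)) with hS
  have hnn : ∀ m : ℤ, 0 ≤ z m := fun m => (hrec m) ▸ le_max_right _ _
  -- periodicity in both directions
  have hzper : ∀ (m : ℤ) (n : ℤ), z (m + n * ℓ) = z m := by
    intro m n
    induction n using Int.induction_on with
    | zero => simp
    | succ i ih => rw [show m + ((i:ℤ)+1) * (ℓ:ℤ) = (m + i*ℓ) + ℓ by ring, hz, ih]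
    | pred i ih =>
      have h := hz (m + (-(i:ℤ)-1) * ℓ)
      rw [show m + (-(i:ℤ)-1) * (ℓ:ℤ) + ℓ = m + (-(i:ℤ)) * ℓ by ring] at h
      rw [← h]; exact ih
  have hSsucc : ∀ b : ℕ, S (b + 1) = S b + a (k - b) := by
    intro b; simp [hS, Finset.sum_range_succ]
  -- lower bound: z k ≥ z (k - b) + S b
  have hlow : ∀ b : ℕ, z (k - b) + S b ≤ z k := by
    intro b
    induction b with
    | zero => simp [hS]
    | succ b ih =>
      have h1 : z (k - b - 1) + a (k - b) ≤ z (k - b) :=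
        (hrec (k - b)) ▸ le_max_left _ _
      have : z (k - (b + 1 : ℕ)) + S (b + 1) =
          (z (k - b - 1) + a (k - b)) + S b := by
        rw [hSsucc]; push_cast; ring_nf
      rw [this]
      exact le_trans (add_le_add_left h1 _) ih
  have hub : ∀ b : ℕ, S b ≤ z k := fun b =>
    le_trans (le_add_of_nonneg_left (hnn (k - b))) (hlow b)
  -- unfolding the recursion
  have key : ∀ b : ℕ, z k = z (k - b) + S b ∨ ∃ c < b, z k = S c := by
    intro b
    induction b with
    | zero => left; simp [hS]
    | succ b ih =>
      rcases ih with h | ⟨c, hc, hcz⟩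
      · rcases max_cases (z (k - b - 1) + a (k - b)) 0 with ⟨he, _⟩ | ⟨he, _⟩
        · left
          have hz2 : z (k - b) = z (k - b - 1) + a (k - b) := (hrec (k - b)).trans he
          rw [h, hz2, hSsucc]
          push_cast; ring_nf
        · right
          refine ⟨b, Nat.lt_succ_self b, ?_⟩
          have hz2 : z (k - b) = 0 := (hrec (k - b)).trans he
          rw [h, hz2, zero_add]
      · exact Or.inr ⟨c, Nat.lt_succ_of_lt hc, hcz⟩
  -- find b₀ < ℓ with z (k - b₀) = 0
  obtain ⟨j, hj⟩ := hzero
  have hℓpos : (0:ℤ) < (ℓ:ℤ) := by exact_mod_cast hℓ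
  obtain ⟨b₀, hb₀lt, hkb₀⟩ : ∃ b₀ : ℕ, b₀ < ℓ ∧ z (k - b₀) = 0 := by
    refine ⟨((k - j) % ℓ).toNat, ?_, ?_⟩
    · have h1 : (k - j) % ℓ < ℓ := Int.emod_lt_of_pos _ hℓpos
      have h2 : 0 ≤ (k - j) % ℓ := Int.emod_nonneg _ (by omega)
      omega
    · have h2 : 0 ≤ (k - j) % ℓ := Int.emod_nonneg _ (by omega)
      have : k - (((k - j) % ℓ).toNat : ℤ) = j + ((k - j) / ℓ) * ℓ := by
        rw [Int.toNat_of_nonneg h2]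
        have := Int.emod_add_mul_ediv (k - j) ℓ
        linarith
      rw [this, hzper, hj]
  -- get z k = S c for some c < ℓ
  obtain ⟨c, hc, hcz⟩ : ∃ c < ℓ, z k = S c := by
    rcases key b₀ with h | ⟨c, hc, hcz⟩
    · exact ⟨b₀, hb₀lt, by rw [h, hkb₀, zero_add]⟩
    · exact ⟨c, lt_trans hc hb₀lt, hcz⟩
  refine le_antisymm ?_ (Finset.sup'_le _ _ fun b _ => hub b)
  rw [hcz]
  exact Finset.le_sup' S (Finset.mem_range.mpr hc)
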